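/- For every θ ∈ [0, 2π) and every γ ∈ [0, π/2], max{Δt_f, Δt_b} ≥ 0, where Δt_f = 2γ − θ·(1 − cos γ) and Δt_b = 2γ + θ·(1 + cos γ) − 2π. That is, at least one of the two boundary light signals arrives no later than the bulk point. -/

import Mathlib

open Real

lemma cos_lower (γ : ℝ) (h0 : 0 ≤ γ) (h1 : γ ≤ π / 2) :
    1 - 2 * γ / π ≤ Real.cos γ := by
  have hπ : (0:ℝ) < π := Real.pi_pos
  have hcon := strictConcaveOn_cos_Icc.concaveOn
  have hx : (0:ℝ) ∈ Set.Icc (-(π/2)) (π/2) := by constructor <;> nlinarith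
  have hy : (π/2) ∈ Set.Icc (-(π/2)) (π/2) := by constructor <;> nlinarith
  have ha : (0:ℝ) ≤ 1 - 2 * γ / π := by
    have : 2 * γ / π ≤ 1 := by rw [div_le_one hπ]; linarith
    linarith
  have hb : (0:ℝ) ≤ 2 * γ / π := by positivity
  have hab : (1 - 2 * γ / π) + 2 * γ / π = 1 := by ring
  have := hcon.2 hx hy ha hb hab
  simp only [smul_eq_mul, Real.cos_zero, Real.cos_pi_div_two] at this
  have hγeq : (1 - 2 * γ / π) * 0 + 2 * γ / π * (π / 2) = γ := by
    field_simp
    ring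
  rw [hγeq] at this
  linarith [this]

/-- For a bulk point on a null circular trajectory of tortoise radius `γ` through
boundary angle `θ`, at least one of the forward/backward boundary signals arrives
no later than the bulk point: `max Δt_f Δt_b ≥ 0`. -/
theorem circular_causality (θ γ : ℝ) (hθ : θ ∈ Set.Ico 0 (2 * π))
    (hγ : γ ∈ Set.Icc 0 (π / 2)) :
    max (2 * γ - θ * (1 - Real.cos γ)) (2 * γ + θ * (1 + Real.cos γ) - 2 * π) ≥ 0 := by
  obtain ⟨hθ0, hθ2⟩ := hθ
  obtain ⟨hγ0, hγ1⟩ := hγ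
  have hπ : (0:ℝ) < π := Real.pi_pos
  have hkey : π * (1 - Real.cos γ) ≤ 2 * γ := by
    have := cos_lower γ hγ0 hγ1
    have h := mul_le_mul_of_nonneg_left this hπ.le
    have : π * (1 - 2 * γ / π) = π - 2 * γ := by field_simp
    nlinarith [cos_lower γ hγ0 hγ1]
  have hc1 : Real.cos γ ≤ 1 := Real.cos_le_one γ
  by_cases h : θ * (1 - Real.cos γ) ≤ 2 * γ
  · exact le_max_of_le_left (by linarith)
  · push_neg at h
    -- θ(1−cosγ) > 2γ ≥ π(1−cosγ), so (θ−π)(1−cosγ) > 0, hence θ > π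
    have h1 : (θ - π) * (1 - Real.cos γ) > 0 := by nlinarith
    have hθπ : θ ≥ π := by
      rcases lt_or_ge θ π with hlt | hge
      · nlinarith
      · exact hge
    refine le_max_of_le_right ?_
    have hc0 : (0:ℝ) ≤ 1 + Real.cos γ := by nlinarith [Real.neg_one_le_cos γ]
    nlinarith
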